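/- For j = 1, 2, ..., k, let A_j be an n_j×n_j real matrix with eigenvalues λ_{1j}, λ_{2j}, ..., λ_{n_j j} counted with multiplicity, and suppose for each j the vector u_j is a unit eigenvector of A_j corresponding to λ_{1j}. Then for any real constants ρ_{pq} (1 ≤ p, q ≤ k), the (n₁+...+n_k)×(n₁+...+n_k) block matrix B whose (p,p) diagonal block is A_p + ρ_{pp} u_p u_pᵀ and whose (p,q) off-diagonal block (p ≠ q) is ρ_{pq} u_p u_qᵀ has eigenvalues λ_{21}, ..., λ_{n₁1}, λ_{22}, ..., λ_{n₂2}, ..., λ_{2k}, ..., λ_{n_k k}, γ₁, γ₂, ..., γ_k (counted with multiplicity), where γ₁, ..., γ_k are the eigenvalues of the k×k matrix B̂ whose (p,p) entry is λ_{1p} + ρ_{pp} and whose (p,q) entry (p ≠ q) is ρ_{pq}. -/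

import Mathlib

open Matrix Polynomial

lemma my_charpoly_conj {n R : Type*} [Fintype n] [DecidableEq n] [CommRing R]
    (P B Q : Matrix n n R) (h : P * Q = 1) :
    (P * B * Q).charpoly = B.charpoly := by
  let f : Matrix n n R →+* Matrix n n R[X] := (Polynomial.C : R →+* R[X]).mapMatrix
  have key : charmatrix (P * B * Q) = f P * charmatrix B * f Q := by
    unfold charmatrix
    rw [_root_.map_mul, _root_.map_mul]
    rw [mul_sub, sub_mul]
    congr 1
    rw [← (scalar_commute (X : R[X]) (fun r' => Commute.all _ _) (f P)).eq, mul_assoc,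
      ← _root_.map_mul, h, _root_.map_one, mul_one]
  have hdet : (f P).det * (f Q).det = 1 := by
    rw [← det_mul, ← _root_.map_mul, h, _root_.map_one, det_one]
  rw [Matrix.charpoly, key, det_mul, det_mul, Matrix.charpoly]
  rw [mul_comm ((f P).det), mul_assoc, hdet, mul_one]

lemma my_charpoly_blockDiagonal' {ι : Type*} [Fintype ι] [LinearOrder ι]
    {m : ι → Type*} [∀ i, Fintype (m i)] [∀ i, DecidableEq (m i)] {R : Type*} [CommRing R]
    (M : ∀ i, Matrix (m i) (m i) R) :
    (Matrix.blockDiagonal' M).charpoly = ∏ i, (M i).charpoly := by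
  have hbt : (Matrix.blockDiagonal' M).BlockTriangular Sigma.fst := by
    rintro ⟨p, i⟩ ⟨q, l⟩ hxy
    exact blockDiagonal'_apply_ne M _ _ (ne_of_gt hxy)
  rw [hbt.charpoly]
  have hsq : ∀ a : ι, ((blockDiagonal' M).toSquareBlock Sigma.fst a).charpoly
      = (M a).charpoly := by
    intro a
    let e : m a ≃ {x : Σ i, m i // x.1 = a} :=
      { toFun := fun x => ⟨⟨a, x⟩, rfl⟩
        invFun := fun x => cast (congrArg m x.2) x.1.2
        left_inv := fun x => rfl
        right_inv := by rintro ⟨⟨i, y⟩, rfl⟩; rfl }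
    calc ((blockDiagonal' M).toSquareBlock Sigma.fst a).charpoly
        = (reindex e.symm e.symm ((blockDiagonal' M).toSquareBlock Sigma.fst a)).charpoly :=
          (Matrix.charpoly_reindex _ _).symm
      _ = (M a).charpoly := by
          congr 1
          ext i j
          simp [reindex_apply, toSquareBlock_def, e, blockDiagonal'_apply_eq]
  refine (Finset.prod_congr rfl fun a _ => hsq a).trans ?_
  apply Finset.prod_subset (Finset.subset_univ _)
  intro a _ ha
  haveI : IsEmpty (m a) :=
    ⟨fun x => ha (Finset.mem_image.mpr ⟨⟨a, x⟩, Finset.mem_univ _, rfl⟩)⟩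
  simp [Matrix.charpoly, Matrix.det_isEmpty]

lemma my_exists_Q (m : ℕ) (u : Fin (m + 1) → ℝ) (hn : ∑ i, u i ^ 2 = 1) :
    ∃ Q : Matrix (Fin (m + 1)) (Fin (m + 1)) ℝ,
      Qᵀ * Q = 1 ∧ ∀ i, Q i 0 = u i := by
  have card_eq : Module.finrank ℝ (EuclideanSpace ℝ (Fin (m + 1))) = Fintype.card (Fin (m + 1)) := by
    simp
  let v : EuclideanSpace ℝ (Fin (m + 1)) := WithLp.toLp 2 (fun i => u i)
  have hv : Orthonormal ℝ (Set.restrict ({0} : Set (Fin (m + 1)))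
      (fun _ : Fin (m + 1) => v)) := by
    rw [orthonormal_iff_ite]
    rintro ⟨i, hi⟩ ⟨j, hj⟩
    simp only [Set.mem_singleton_iff] at hi hj
    subst hi; subst hj
    simp only [if_pos rfl, Set.restrict_apply]
    calc (inner ℝ v v : ℝ)
        = ∑ i, u i * u i := by
          rw [PiLp.inner_apply]
          exact Finset.sum_congr rfl fun i _ => by simp only [v, RCLike.inner_apply, conj_trivial]
      _ = 1 := by simpa [pow_two] using hn
  obtain ⟨b, hb⟩ := hv.exists_orthonormalBasis_extension_of_card_eq card_eq
  refine ⟨Matrix.of fun i l => b l i, ?_, ?_⟩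
  · ext l r
    have := orthonormal_iff_ite.mp b.orthonormal l r
    simp only [PiLp.inner_apply, RCLike.inner_apply, starRingEnd_apply, star_trivial] at this
    simp only [Matrix.mul_apply, transpose_apply, Matrix.of_apply, Matrix.one_apply]
    rw [← this]
    exact Finset.sum_congr rfl fun _ _ => mul_comm _ _
  · intro i
    have := hb 0 rfl
    simp only [Matrix.of_apply]
    rw [this]

lemma my_bd_mul_apply {ι : Type*} [DecidableEq ι] [Fintype ι] {m : ι → Type*}
    [∀ i, Fintype (m i)] [∀ i, DecidableEq (m i)] {R : Type*} [CommRing R]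
    (P : ∀ i, Matrix (m i) (m i) R) (S : Matrix (Σ i, m i) (Σ i, m i) R)
    (p : ι) (i : m p) (y : Σ i, m i) :
    (blockDiagonal' P * S) ⟨p, i⟩ y = ∑ b, P p i b * S ⟨p, b⟩ y := by
  rw [mul_apply, ← Finset.univ_sigma_univ, Finset.sum_sigma]
  rw [Finset.sum_eq_single_of_mem p (Finset.mem_univ p)]
  · simp [blockDiagonal'_apply_eq]
  · intro j _ hj
    simp [blockDiagonal'_apply_ne _ _ _ (Ne.symm hj)]

lemma my_mul_bd_apply {ι : Type*} [DecidableEq ι] [Fintype ι] {m : ι → Type*}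
    [∀ i, Fintype (m i)] [∀ i, DecidableEq (m i)] {R : Type*} [CommRing R]
    (P : ∀ i, Matrix (m i) (m i) R) (S : Matrix (Σ i, m i) (Σ i, m i) R)
    (q : ι) (l : m q) (x : Σ i, m i) :
    (S * blockDiagonal' P) x ⟨q, l⟩ = ∑ b, S x ⟨q, b⟩ * P q b l := by
  rw [mul_apply, ← Finset.univ_sigma_univ, Finset.sum_sigma]
  rw [Finset.sum_eq_single_of_mem q (Finset.mem_univ q)]
  · simp [blockDiagonal'_apply_eq]
  · intro j _ hj
    simp [blockDiagonal'_apply_ne _ _ _ hj]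

def myFinEquiv (m : ℕ) : Fin (m + 1) ≃ (Unit ⊕ Fin m) where
  toFun i := Fin.cases (Sum.inl ()) (fun i => Sum.inr i) i
  invFun y := Sum.elim (fun _ => 0) Fin.succ y
  left_inv := by
    intro i
    induction i using Fin.cases <;> simp
  right_inv := by rintro (⟨⟩ | i) <;> simp

def mySigEquiv (k : ℕ) (n : Fin k → ℕ) :
    ((j : Fin k) × Fin (n j + 1)) ≃ (Fin k ⊕ (j : Fin k) × Fin (n j)) where
  toFun x := Fin.cases (Sum.inl x.1) (fun i => Sum.inr ⟨x.1, i⟩) x.2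
  invFun y := Sum.elim (fun j => ⟨j, 0⟩) (fun x => ⟨x.1, x.2.succ⟩) y
  left_inv := by
    rintro ⟨j, i⟩
    induction i using Fin.cases <;> simp
  right_inv := by rintro (j | ⟨j, i⟩) <;> simp

lemma my_block_fact {m : ℕ} (M : Matrix (Fin (m + 1)) (Fin (m + 1)) ℝ) (lam : ℝ)
    (h0 : ∀ i, M i 0 = if i = 0 then lam else 0) :
    M.charpoly = (X - C lam) * (M.submatrix Fin.succ Fin.succ).charpoly := by
  rw [← Matrix.charpoly_reindex (myFinEquiv m) M]
  set N := reindex (myFinEquiv m) (myFinEquiv m) M with hNdef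
  have h11 : N.toBlocks₁₁ = (Matrix.of fun _ _ => lam) := by
    ext i j
    show N (Sum.inl i) (Sum.inl j) = lam
    simp [hNdef, myFinEquiv, h0 0]
  have h21 : N.toBlocks₂₁ = 0 := by
    ext i j
    show N (Sum.inr i) (Sum.inl j) = 0
    simp [hNdef, myFinEquiv, h0 i.succ, Fin.succ_ne_zero]
  have h22 : N.toBlocks₂₂ = M.submatrix Fin.succ Fin.succ := by
    ext i j
    rfl
  have hN : N = fromBlocks (Matrix.of fun _ _ => lam) N.toBlocks₁₂
      0 (M.submatrix Fin.succ Fin.succ) := by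
    conv_lhs => rw [← fromBlocks_toBlocks N]
    rw [h11, h21, h22]
  rw [hN, charpoly_fromBlocks_zero₂₁]
  congr 1
  rw [Matrix.charpoly, det_unique, charmatrix_apply_eq]
  simp

/-- Main theorem: the eigenvalues of the full block matrix `B` (general real matrices,
rank-one coupling blocks `ρ_{pq} u_p u_qᵀ`) are those of the `k × k` matrix `B̂`
together with the non-Perron eigenvalues of the blocks. -/
theorem stmt_4 (k : ℕ) (n : Fin k → ℕ)
    (A : ∀ j, Matrix (Fin (n j + 1)) (Fin (n j + 1)) ℝ)
    (lam1 : Fin k → ℝ)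
    (μ : ∀ j, Fin (n j) → ℂ)
    (hspec : ∀ j, ((A j).map Complex.ofReal).charpoly.roots
        = (lam1 j : ℂ) ::ₘ Finset.univ.val.map (μ j))
    (u : ∀ j, Fin (n j + 1) → ℝ)
    (heig : ∀ j, (A j).mulVec (u j) = lam1 j • u j)
    (hnorm : ∀ j, ∑ i, u j i ^ 2 = 1)
    (ρ : Fin k → Fin k → ℝ)
    (B : Matrix ((j : Fin k) × Fin (n j + 1)) ((j : Fin k) × Fin (n j + 1)) ℝ)
    (hB : ∀ x y : (j : Fin k) × Fin (n j + 1), B x y =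
      (if h : x.1 = y.1 then A x.1 x.2 (Fin.cast (by rw [h]) y.2) else 0)
        + ρ x.1 y.1 * u x.1 x.2 * u y.1 y.2)
    (Bhat : Matrix (Fin k) (Fin k) ℝ)
    (hBhat : ∀ p q : Fin k, Bhat p q = (if p = q then lam1 p else 0) + ρ p q) :
    (B.map Complex.ofReal).charpoly.roots
      = (Bhat.map Complex.ofReal).charpoly.roots
        + Finset.univ.val.bind fun j : Fin k => Finset.univ.val.map (μ j) := by
  -- orthogonal matrices
  choose Q hQ1 hQu using fun j => my_exists_Q (n j) (u j) (hnorm j)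
  have hQu' : ∀ j (i : Fin (n j + 1)), ∑ l, Q j l i * u j l
      = if i = 0 then (1 : ℝ) else 0 := by
    intro j i
    have h := congrFun (congrFun (hQ1 j) i) 0
    rw [Matrix.mul_apply, Matrix.one_apply] at h
    simp only [transpose_apply] at h
    rw [← h]
    exact Finset.sum_congr rfl fun l _ => by rw [hQu j l]
  set M : ∀ j, Matrix (Fin (n j + 1)) (Fin (n j + 1)) ℝ :=
    fun j => (Q j)ᵀ * A j * Q j with hMdef
  have hM0 : ∀ j (i : Fin (n j + 1)), M j i 0 = if i = 0 then lam1 j else 0 := by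
    intro j i
    have hAQ : ∀ l, (A j * Q j) l 0 = lam1 j * u j l := by
      intro l
      rw [Matrix.mul_apply]
      have : ∑ m, A j l m * Q j m 0 = ∑ m, A j l m * u j m :=
        Finset.sum_congr rfl fun m _ => by rw [hQu j m]
      rw [this]
      have := congrFun (heig j) l
      rw [Matrix.mulVec, dotProduct] at this
      rw [this, Pi.smul_apply, smul_eq_mul]
    show ((Q j)ᵀ * A j * Q j) i 0 = _
    rw [Matrix.mul_assoc, Matrix.mul_apply]
    have : ∑ l, (Q j)ᵀ i l * (A j * Q j) l 0 = lam1 j * ∑ l, Q j l i * u j l := by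
      rw [Finset.mul_sum]
      exact Finset.sum_congr rfl fun l _ => by rw [transpose_apply, hAQ l]; ring
    rw [this, hQu' j i]
    split_ifs <;> ring
  -- big conjugation
  set BQ : Matrix ((j : Fin k) × Fin (n j + 1)) ((j : Fin k) × Fin (n j + 1)) ℝ :=
    blockDiagonal' Q with hBQdef
  set BQt : Matrix ((j : Fin k) × Fin (n j + 1)) ((j : Fin k) × Fin (n j + 1)) ℝ :=
    blockDiagonal' (fun j => (Q j)ᵀ) with hBQtdef
  have hinv : BQt * BQ = 1 := by
    rw [hBQdef, hBQtdef, ← blockDiagonal'_mul]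
    rw [show (fun j => (Q j)ᵀ * Q j) = fun j => (1 : Matrix (Fin (n j + 1)) (Fin (n j + 1)) ℝ)
      from funext fun j => hQ1 j]
    exact blockDiagonal'_one
  -- split B
  set Ru : Matrix ((j : Fin k) × Fin (n j + 1)) ((j : Fin k) × Fin (n j + 1)) ℝ :=
    Matrix.of fun x y => ρ x.1 y.1 * u x.1 x.2 * u y.1 y.2 with hRudef
  have hBsplit : B = blockDiagonal' A + Ru := by
    ext x y
    rcases x with ⟨p, i⟩
    rcases y with ⟨q, l⟩
    rw [hB, Matrix.add_apply]
    congr 1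
    rcases eq_or_ne p q with rfl | hne
    · rw [dif_pos rfl, blockDiagonal'_apply_eq]
      exact congrArg _ (Fin.ext rfl)
    · rw [dif_neg hne, blockDiagonal'_apply_ne _ _ _ hne]
  -- conjugated coupling
  set Re : Matrix ((j : Fin k) × Fin (n j + 1)) ((j : Fin k) × Fin (n j + 1)) ℝ :=
    Matrix.of fun x y => ρ x.1 y.1 * (if x.2 = 0 then (1:ℝ) else 0)
      * (if y.2 = 0 then (1:ℝ) else 0) with hRedef
  have hconjR : BQt * Ru * BQ = Re := by
    ext x y
    rcases x with ⟨p, i⟩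
    rcases y with ⟨q, l⟩
    rw [my_mul_bd_apply]
    have hleft : ∀ b : Fin (n q + 1), (BQt * Ru) ⟨p, i⟩ ⟨q, b⟩
        = ρ p q * (if i = 0 then (1:ℝ) else 0) * u q b := by
      intro b
      rw [hBQtdef, my_bd_mul_apply]
      have : ∀ c, (Q p)ᵀ i c * Ru ⟨p, c⟩ ⟨q, b⟩
          = (ρ p q * u q b) * (Q p c i * u p c) := by
        intro c
        rw [transpose_apply, hRudef]
        show Q p c i * (ρ p q * u p c * u q b) = _
        ring
      rw [Finset.sum_congr rfl fun c _ => this c, ← Finset.mul_sum, hQu' p i]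
      ring
    rw [Finset.sum_congr rfl fun b _ => by rw [hleft b]]
    have : ∀ b, ρ p q * (if i = 0 then (1:ℝ) else 0) * u q b * Q q b l
        = (ρ p q * (if i = 0 then (1:ℝ) else 0)) * (Q q b l * u q b) := fun b => by ring
    rw [Finset.sum_congr rfl fun b _ => this b, ← Finset.mul_sum, hQu' q l]
    rfl
  set Bc : Matrix ((j : Fin k) × Fin (n j + 1)) ((j : Fin k) × Fin (n j + 1)) ℝ :=
    BQt * B * BQ with hBcdef
  have hBc : Bc = blockDiagonal' M + Re := by
    rw [hBcdef, hBsplit, Matrix.mul_add, Matrix.add_mul, hconjR]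
    congr 1
    rw [hBQdef, hBQtdef, ← blockDiagonal'_mul, ← blockDiagonal'_mul]
  have hBcchar : Bc.charpoly = B.charpoly := my_charpoly_conj _ _ _ hinv
  -- reindex
  set e := mySigEquiv k n with hedef
  set N := reindex e e Bc with hNdef
  set Cm : ∀ j, Matrix (Fin (n j)) (Fin (n j)) ℝ :=
    fun j => (M j).submatrix Fin.succ Fin.succ with hCmdef
  have hNapp : ∀ x y, N x y = Bc (e.symm x) (e.symm y) := fun x y => rfl
  have h11 : N.toBlocks₁₁ = Bhat := by
    ext p q
    show N (Sum.inl p) (Sum.inl q) = Bhat p q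
    rw [hNapp]
    have hx : e.symm (Sum.inl p) = ⟨p, 0⟩ := rfl
    have hy : e.symm (Sum.inl q) = ⟨q, 0⟩ := rfl
    rw [hx, hy, hBc, Matrix.add_apply, hBhat]
    rcases eq_or_ne p q with rfl | hne
    · rw [blockDiagonal'_apply_eq, hM0, if_pos rfl, if_pos rfl]
      show lam1 p + ρ p p * (if (0:Fin (n p + 1)) = 0 then (1:ℝ) else 0)
          * (if (0:Fin (n p + 1)) = 0 then (1:ℝ) else 0) = lam1 p + ρ p p
      rw [if_pos rfl]; ring
    · rw [blockDiagonal'_apply_ne _ _ _ hne, if_neg hne]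
      show 0 + ρ p q * (if (0:Fin (n p + 1)) = 0 then (1:ℝ) else 0)
          * (if (0:Fin (n q + 1)) = 0 then (1:ℝ) else 0) = 0 + ρ p q
      rw [if_pos rfl, if_pos rfl]; ring
  have h21 : N.toBlocks₂₁ = 0 := by
    ext x q
    rcases x with ⟨p, i⟩
    show N (Sum.inr ⟨p, i⟩) (Sum.inl q) = 0
    rw [hNapp]
    have hx : e.symm (Sum.inr ⟨p, i⟩) = ⟨p, i.succ⟩ := rfl
    have hy : e.symm (Sum.inl q) = ⟨q, 0⟩ := rfl
    rw [hx, hy, hBc, Matrix.add_apply]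
    have hRe0 : Re ⟨p, i.succ⟩ ⟨q, 0⟩ = 0 := by
      show ρ p q * (if i.succ = 0 then (1:ℝ) else 0) * _ = 0
      rw [if_neg (Fin.succ_ne_zero i)]; ring
    rw [hRe0]
    rcases eq_or_ne p q with rfl | hne
    · rw [blockDiagonal'_apply_eq, hM0, if_neg (Fin.succ_ne_zero i)]; ring
    · rw [blockDiagonal'_apply_ne _ _ _ hne]; ring
  have h22 : N.toBlocks₂₂ = blockDiagonal' Cm := by
    ext x y
    rcases x with ⟨p, i⟩
    rcases y with ⟨q, l⟩
    show N (Sum.inr ⟨p, i⟩) (Sum.inr ⟨q, l⟩) = _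
    rw [hNapp]
    have hx : e.symm (Sum.inr ⟨p, i⟩) = ⟨p, i.succ⟩ := rfl
    have hy : e.symm (Sum.inr ⟨q, l⟩) = ⟨q, l.succ⟩ := rfl
    rw [hx, hy, hBc, Matrix.add_apply]
    have hRe0 : Re ⟨p, i.succ⟩ ⟨q, l.succ⟩ = 0 := by
      show ρ p q * (if i.succ = 0 then (1:ℝ) else 0) * _ = 0
      rw [if_neg (Fin.succ_ne_zero i)]; ring
    rw [hRe0, add_zero]
    rcases eq_or_ne p q with rfl | hne
    · rw [blockDiagonal'_apply_eq, blockDiagonal'_apply_eq]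
      rfl
    · rw [blockDiagonal'_apply_ne _ _ _ hne, blockDiagonal'_apply_ne _ _ _ hne]
  have hNblocks : N = fromBlocks Bhat N.toBlocks₁₂ 0 (blockDiagonal' Cm) := by
    conv_lhs => rw [← fromBlocks_toBlocks N]
    rw [h11, h21, h22]
  have hmain : B.charpoly = Bhat.charpoly * ∏ j, (Cm j).charpoly := by
    rw [← hBcchar, ← Matrix.charpoly_reindex e Bc, ← hNdef, hNblocks,
      charpoly_fromBlocks_zero₂₁]
    have hbd : (blockDiagonal' Cm).charpoly = ∏ j, (Cm j).charpoly := by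
      convert my_charpoly_blockDiagonal' Cm using 2
    rw [hbd]
  -- per-block factorization
  have hAfact : ∀ j, (A j).charpoly = (X - C (lam1 j)) * (Cm j).charpoly := by
    intro j
    have h1 : (M j).charpoly = (A j).charpoly := my_charpoly_conj _ _ _ (hQ1 j)
    rw [← h1]
    exact my_block_fact (M j) (lam1 j) (hM0 j)
  -- pass to ℂ
  have hmapchar : ∀ {m : Type} [Fintype m] [DecidableEq m] (T : Matrix m m ℝ),
      (T.map Complex.ofReal).charpoly = T.charpoly.map Complex.ofRealHom :=
    fun T => Matrix.charpoly_map T Complex.ofRealHom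
  have hCroots : ∀ j, ((Cm j).map Complex.ofReal).charpoly.roots
      = Finset.univ.val.map (μ j) := by
    intro j
    have h2 : ((A j).map Complex.ofReal).charpoly
        = (X - C ((lam1 j : ℂ))) * ((Cm j).map Complex.ofReal).charpoly := by
      rw [hmapchar, hAfact j, Polynomial.map_mul, hmapchar]
      congr 1
      rw [Polynomial.map_sub, Polynomial.map_X, Polynomial.map_C]
      rfl
    have hne : (X - C ((lam1 j : ℂ))) * ((Cm j).map Complex.ofReal).charpoly ≠ 0 :=
      (Polynomial.Monic.mul (Polynomial.monic_X_sub_C _)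
        (Matrix.charpoly_monic _)).ne_zero
    have h3 := hspec j
    rw [h2, Polynomial.roots_mul hne, Polynomial.roots_X_sub_C,
      Multiset.singleton_add] at h3
    exact (Multiset.cons_inj_right _).mp h3
  -- conclude
  have hprodne : ∀ j ∈ Finset.univ, ((Cm j).map Complex.ofReal).charpoly ≠ 0 :=
    fun j _ => (Matrix.charpoly_monic _).ne_zero
  rw [hmapchar B, hmain, Polynomial.map_mul, Polynomial.map_prod]
  rw [Polynomial.roots_mul, ← hmapchar Bhat]
  · congr 1
    rw [show (fun j => ((Cm j).charpoly.map Complex.ofRealHom))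
        = fun j => ((Cm j).map Complex.ofReal).charpoly
      from funext fun j => (hmapchar (Cm j)).symm]
    rw [Polynomial.roots_prod _ _ (Finset.prod_ne_zero_iff.mpr hprodne)]
    exact congrArg _ (funext fun j => hCroots j)
  · apply mul_ne_zero
    · exact (((Matrix.charpoly_monic Bhat)).map _).ne_zero
    · apply Finset.prod_ne_zero_iff.mpr
      intro j _
      exact ((Matrix.charpoly_monic (Cm j)).map _).ne_zero
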